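/- Tight instance for single-category chores (value computation): fix n ≥ 1, let M = {g_1, ..., g_{2n}} with common valuation v(g_j) = −1/(2n) if j < n, v(g_j) = −1/2 if n ≤ j ≤ n+1, and v(g_j) = 1/(2n) − 1 otherwise. Define P_k = {g_k, g_{2n+1−k}} for k ∈ {1, ..., n}. Then (P_k) is a partition of M into n bundles of size 2, v(P_k) = −1 for every k, and v(M) = −n. Moreover under quotas q⁻ = 1, q⁺ = n+1, the maximin share over n agents equals −1. -/
import Mathlib


open Finset

/-- Item values of the tight chores instance (items 1-indexed `1, …, 2n`):
`v j = −1/(2n)` if `j < n`, `v j = −1/2` if `n ≤ j ≤ n+1`, `v j = 1/(2n) − 1` otherwise. -/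
noncomputable def tightChoresVal (n : ℕ) (j : ℕ) : ℝ :=
  if j < n then -(1 / (2 * n : ℝ))
  else if j ≤ n + 1 then -(1 / 2)
  else 1 / (2 * n : ℝ) - 1

/-- Bundles of the tight chores instance: `P_k = {k, 2n+1−k}` for `k ∈ {1, …, n}`. -/
def tightChoresBundle (n : ℕ) (k : ℕ) : Finset ℕ :=
  {k, 2 * n + 1 - k}

/-- A quota-feasible partition of the items `{1, …, 2n}` into `n` bundles of sizes in
`[1, n+1]`. -/
def IsFeasibleChoresPartition (n : ℕ) (P : Fin n → Finset ℕ) : Prop :=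
  (∀ i j, i ≠ j → Disjoint (P i) (P j)) ∧
  Finset.univ.biUnion P = Finset.Icc 1 (2 * n) ∧
  ∀ k, 1 ≤ (P k).card ∧ (P k).card ≤ n + 1

lemma tight_bundle_sum (n k : ℕ) (hn : 1 ≤ n) (hk : 1 ≤ k) (hk2 : k ≤ n) :
    ∑ j ∈ tightChoresBundle n k, tightChoresVal n j = -1 := by
  rw [tightChoresBundle, Finset.sum_pair (by omega)]
  rcases eq_or_lt_of_le hk2 with h | h
  · subst h
    have e : 2 * k + 1 - k = k + 1 := by omega
    rw [e]
    simp [tightChoresVal]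
    norm_num
  · have e1 : ¬ (2 * n + 1 - k < n) := by omega
    have e2 : ¬ (2 * n + 1 - k ≤ n + 1) := by omega
    simp only [tightChoresVal, if_pos h, if_neg e1, if_neg e2]
    ring

lemma tight_bundle_card (n k : ℕ) (hk : 1 ≤ k) (hk2 : k ≤ n) :
    (tightChoresBundle n k).card = 2 := by
  rw [tightChoresBundle, Finset.card_insert_of_notMem (by simp; omega),
    Finset.card_singleton]

lemma tight_bundle_disjoint (n k k' : ℕ) (hk : 1 ≤ k) (hk2 : k ≤ n) (hk' : 1 ≤ k')
    (hk'2 : k' ≤ n) (hne : k ≠ k') :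
    Disjoint (tightChoresBundle n k) (tightChoresBundle n k') := by
  rw [Finset.disjoint_left]
  intro a ha hb
  simp only [tightChoresBundle, Finset.mem_insert, Finset.mem_singleton] at ha hb
  omega

lemma tight_union (n : ℕ) (hn : 1 ≤ n) :
    (Finset.Icc 1 n).biUnion (tightChoresBundle n) = Finset.Icc 1 (2 * n) := by
  ext j
  simp only [Finset.mem_biUnion, Finset.mem_Icc, tightChoresBundle, Finset.mem_insert,
    Finset.mem_singleton]
  constructor
  · rintro ⟨k, ⟨h1, h2⟩, h3 | h3⟩ <;> omega
  · rintro ⟨h1, h2⟩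
    by_cases hj : j ≤ n
    · exact ⟨j, ⟨h1, hj⟩, Or.inl rfl⟩
    · exact ⟨2 * n + 1 - j, ⟨by omega, by omega⟩, Or.inr (by omega)⟩

lemma tight_total (n : ℕ) (hn : 1 ≤ n) :
    (∑ j ∈ Finset.Icc 1 (2 * n), tightChoresVal n j) = -(n : ℝ) := by
  rw [← tight_union n hn, Finset.sum_biUnion ?_]
  · rw [Finset.sum_congr rfl (fun k hk => by
      simp only [Finset.mem_Icc] at hk
      exact tight_bundle_sum n k hn hk.1 hk.2)]
    simp [Nat.card_Icc]
  · intro a ha b hb hab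
    simp only [Finset.coe_Icc, Set.mem_Icc] at ha hb
    exact tight_bundle_disjoint n a b ha.1 ha.2 hb.1 hb.2 hab

/-- tight instance for single-category chores.  The bundles `P_1, …, P_n`
partition `{1, …, 2n}` into bundles of size `2`, each of value `−1`; the total value is
`−n`; and under quotas `q⁻ = 1`, `q⁺ = n+1` the maximin share over `n` agents equals `−1`. -/
theorem tight_chores_partition (n : ℕ) (hn : 1 ≤ n) :
    (∀ k ∈ Finset.Icc 1 n,
        (∑ j ∈ tightChoresBundle n k, tightChoresVal n j) = -1 ∧
        (tightChoresBundle n k).card = 2) ∧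
    (∀ k ∈ Finset.Icc 1 n, ∀ k' ∈ Finset.Icc 1 n, k ≠ k' →
        Disjoint (tightChoresBundle n k) (tightChoresBundle n k')) ∧
    (Finset.Icc 1 n).biUnion (tightChoresBundle n) = Finset.Icc 1 (2 * n) ∧
    (∑ j ∈ Finset.Icc 1 (2 * n), tightChoresVal n j) = -(n : ℝ) ∧
    IsGreatest {x : ℝ | ∃ P : Fin n → Finset ℕ, IsFeasibleChoresPartition n P ∧
        x = Finset.univ.inf' (Finset.univ_nonempty_iff.mpr ⟨⟨0, hn⟩⟩)
          (fun k => ∑ g ∈ P k, tightChoresVal n g)} (-1) := by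
  have key1 : ∀ k ∈ Finset.Icc 1 n,
      (∑ j ∈ tightChoresBundle n k, tightChoresVal n j) = -1 ∧
      (tightChoresBundle n k).card = 2 := by
    intro k hk
    simp only [Finset.mem_Icc] at hk
    exact ⟨tight_bundle_sum n k hn hk.1 hk.2, tight_bundle_card n k hk.1 hk.2⟩
  refine ⟨key1, ?_, tight_union n hn, tight_total n hn, ?_, ?_⟩
  · intro k hk k' hk' hne
    simp only [Finset.mem_Icc] at hk hk'
    exact tight_bundle_disjoint n k k' hk.1 hk.2 hk'.1 hk'.2 hne
  · -- membership: the explicit partition achieves -1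
    refine ⟨fun k : Fin n => tightChoresBundle n (k.1 + 1), ⟨?_, ?_, ?_⟩, ?_⟩
    · intro i j hij
      have : i.1 ≠ j.1 := fun h => hij (Fin.ext h)
      exact tight_bundle_disjoint n (i.1 + 1) (j.1 + 1) (by omega) (by omega)
        (by omega) (by omega) (by omega)
    · have : Finset.univ.biUnion (fun k : Fin n => tightChoresBundle n (k.1 + 1))
          = (Finset.Icc 1 n).biUnion (tightChoresBundle n) := by
        ext j
        simp only [Finset.mem_biUnion, Finset.mem_univ, true_and, Finset.mem_Icc]
        constructor
        · rintro ⟨k, hk⟩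
          exact ⟨k.1 + 1, ⟨by omega, by omega⟩, hk⟩
        · rintro ⟨m, ⟨h1, h2⟩, hm⟩
          refine ⟨⟨m - 1, by omega⟩, ?_⟩
          simpa [Nat.sub_add_cancel h1] using hm
      rw [this, tight_union n hn]
    · intro k
      rw [tight_bundle_card n (k.1 + 1) (by omega) (by omega)]
      omega
    · have hval : ∀ k : Fin n,
          (∑ g ∈ tightChoresBundle n (k.1 + 1), tightChoresVal n g) = -1 :=
        fun k => tight_bundle_sum n (k.1 + 1) hn (by omega) (by omega)
      symm
      simp only [hval]
      exact Finset.inf'_const _ _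
  · -- upper bound
    rintro x ⟨P, ⟨hdisj, hunion, hq⟩, rfl⟩
    set S := Finset.univ.inf' (Finset.univ_nonempty_iff.mpr ⟨⟨0, hn⟩⟩)
      (fun k => ∑ g ∈ P k, tightChoresVal n g) with hS
    have hsum : (∑ k : Fin n, ∑ g ∈ P k, tightChoresVal n g) = -(n : ℝ) := by
      have hpd : (↑(Finset.univ : Finset (Fin n)) : Set (Fin n)).PairwiseDisjoint P :=
        fun a _ b _ hab => hdisj a b hab
      have := Finset.sum_biUnion (f := tightChoresVal n) hpd
      rw [hunion] at this
      rw [← this, tight_total n hn]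
    have hle : ∀ k : Fin n, S ≤ ∑ g ∈ P k, tightChoresVal n g :=
      fun k => Finset.inf'_le _ (Finset.mem_univ k)
    have hmul : (n : ℝ) * S ≤ -(n : ℝ) := by
      calc (n : ℝ) * S = ∑ _k : Fin n, S := by
            simp [Finset.sum_const, mul_comm]
        _ ≤ ∑ k : Fin n, ∑ g ∈ P k, tightChoresVal n g :=
            Finset.sum_le_sum (fun k _ => hle k)
        _ = -(n : ℝ) := hsum
    have hn' : (1 : ℝ) ≤ n := by exact_mod_cast hn
    nlinarith [hmul, hn']
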